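/- Combining the two previous sandwich inequalities: under the shared terminal condition and assumptions, X_0 ≼ V_0 ≼ Y_0, and consequently ln det X_0 ≤ ln det V_0 ≤ ln det Y_0 whenever X_0 is positive definite. -/

import Mathlib

open Matrix

private lemma psdConj {n m : ℕ} {M : Matrix (Fin n) (Fin n) ℝ} (hM : M.PosSemidef)
    (A : Matrix (Fin n) (Fin m) ℝ) : (Aᵀ * M * A).PosSemidef := by
  simpa [Matrix.conjTranspose_eq_transpose_of_trivial] using hM.conjTranspose_mul_mul_same A

private lemma transpose_eq_self_of_psd {n : ℕ} {M : Matrix (Fin n) (Fin n) ℝ}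
    (hM : M.IsHermitian) : Mᵀ = M := by
  rw [← Matrix.conjTranspose_eq_transpose_of_trivial]; exact hM

private lemma completion_of_squares {n m : ℕ} (Cm F W : Matrix (Fin n) (Fin n) ℝ)
    (B : Matrix (Fin n) (Fin m) ℝ) (Rm J : Matrix (Fin m) (Fin m) ℝ)
    (hW : Wᵀ = W) (hJ : Jᵀ = J) (hJRJ : J * (Rm + Bᵀ * W * B) * J = J) :
    Cm + Fᵀ * W * F - Fᵀ * W * B * J * Bᵀ * W * F
      = Cm + (F + B * (-J * Bᵀ * W * F))ᵀ * W * (F + B * (-J * Bᵀ * W * F))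
        + (-J * Bᵀ * W * F)ᵀ * Rm * (-J * Bᵀ * W * F) := by
  have h := congrArg (fun Z : Matrix (Fin m) (Fin m) ℝ =>
    Fᵀ * (W * (B * (Z * (Bᵀ * (W * F)))))) hJRJ
  simp only [Matrix.mul_add, Matrix.add_mul, Matrix.neg_mul, Matrix.mul_neg,
    Matrix.mul_assoc] at h
  simp only [transpose_add, transpose_mul, transpose_neg, transpose_transpose, hW, hJ,
    Matrix.mul_add, Matrix.add_mul, Matrix.neg_mul, Matrix.mul_neg, Matrix.mul_assoc,
    neg_neg, sub_eq_add_neg, neg_add]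
  rw [← sub_eq_zero]
  rw [← sub_eq_zero] at h
  linear_combination (norm := abel) -h

private lemma one_le_det_one_add {n : ℕ} {E : Matrix (Fin n) (Fin n) ℝ}
    (hE : E.PosSemidef) : 1 ≤ (1 + E).det := by
  have hH := hE.isHermitian
  set U := (hH.eigenvectorUnitary : Matrix (Fin n) (Fin n) ℝ) with hUdef
  have hU : U * star U = 1 := Matrix.mem_unitaryGroup_iff.mp hH.eigenvectorUnitary.2
  have h1 : (1 : Matrix (Fin n) (Fin n) ℝ) + E
      = U * (1 + diagonal (RCLike.ofReal ∘ hH.eigenvalues)) * star U := by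
    rw [Matrix.mul_add, Matrix.add_mul, Matrix.mul_one, hU]
    conv_lhs => rw [hH.spectral_theorem, Unitary.conjStarAlgAut_apply]
  rw [h1, det_mul, det_mul, mul_right_comm, ← det_mul, hU, det_one, one_mul]
  have h2 : (1 : Matrix (Fin n) (Fin n) ℝ) + diagonal (RCLike.ofReal ∘ hH.eigenvalues)
      = diagonal (fun i => 1 + (RCLike.ofReal ∘ hH.eigenvalues) i) := by
    rw [← diagonal_one, diagonal_add]
  rw [h2, det_diagonal]
  have hle : ∏ _i : Fin n, (1 : ℝ) ≤ ∏ i, (1 + (RCLike.ofReal ∘ hH.eigenvalues) i) := by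
    refine Finset.prod_le_prod (fun i _ => zero_le_one) fun i _ => ?_
    have := hE.eigenvalues_nonneg i
    simp only [Function.comp_apply, RCLike.ofReal_real_eq_id, id_eq]
    linarith
  simpa using hle

open scoped MatrixOrder in
private lemma det_le_det_add {n : ℕ} {A D : Matrix (Fin n) (Fin n) ℝ}
    (hA : A.PosDef) (hD : D.PosSemidef) : A.det ≤ (A + D).det := by
  set Q := CFC.sqrt A with hQdef
  have hQ : Q.PosSemidef := (CFC.sqrt_nonneg A).posSemidef
  have hQQ : Q * Q = A := CFC.sqrt_mul_sqrt_self A hA.posSemidef.nonneg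
  have hdetA : 0 < A.det := hA.det_pos
  have hQdet : Q.det ≠ 0 := by
    intro h
    rw [← hQQ, det_mul, h, mul_zero] at hdetA
    exact lt_irrefl _ hdetA
  have hQunit : IsUnit Q.det := hQdet.isUnit
  have hQT : Qᵀ = Q := transpose_eq_self_of_psd hQ.isHermitian
  have hJT : (Q⁻¹)ᵀ = Q⁻¹ := by rw [Matrix.transpose_nonsing_inv, hQT]
  have hE : (Q⁻¹ * D * Q⁻¹).PosSemidef := by
    have := psdConj hD Q⁻¹
    rwa [hJT] at this
  have h1 : A + D = Q * (1 + Q⁻¹ * D * Q⁻¹) * Q := by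
    rw [Matrix.mul_add, Matrix.add_mul, Matrix.mul_one, hQQ]
    congr 1
    rw [Matrix.mul_assoc, Matrix.mul_assoc, Matrix.nonsing_inv_mul Q hQunit, Matrix.mul_one,
      ← Matrix.mul_assoc, Matrix.mul_nonsing_inv Q hQunit, Matrix.one_mul]
  rw [h1, det_mul, det_mul, mul_right_comm, ← det_mul, hQQ]
  nlinarith [one_le_det_one_add hE]

theorem cip_sandwich {n m : ℕ} (T : ℕ)
    (C F V X Y : ℕ → Matrix (Fin n) (Fin n) ℝ)
    (B : ℕ → Matrix (Fin n) (Fin m) ℝ)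
    (R : ℕ → Matrix (Fin m) (Fin m) ℝ)
    (K : ℕ → Matrix (Fin m) (Fin n) ℝ)
    (hC : ∀ t ≤ T, (C t).PosSemidef)
    (hR : ∀ t < T, (R t).PosDef)
    (hK : ∀ t < T, K t = -(R t + (B t)ᵀ * V (t + 1) * B t)⁻¹ * (B t)ᵀ * V (t + 1) * F t)
    (hVT : V T = C T) (hXT : X T = C T) (hYT : Y T = C T)
    (hV : ∀ t < T, V t = C t + (F t)ᵀ * V (t + 1) * F t
      - (F t)ᵀ * V (t + 1) * B t * (R t + (B t)ᵀ * V (t + 1) * B t)⁻¹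
        * (B t)ᵀ * V (t + 1) * F t)
    (hX : ∀ t < T, X t = C t
      + (F t + B t * K t)ᵀ * X (t + 1) * (F t + B t * K t))
    (hY : ∀ t < T, Y t = C t + (F t)ᵀ * Y (t + 1) * F t) :
    (V 0 - X 0).PosSemidef ∧ (Y 0 - V 0).PosSemidef ∧
    ((X 0).PosDef →
      Real.log (X 0).det ≤ Real.log (V 0).det ∧
      Real.log (V 0).det ≤ Real.log (Y 0).det) := by
  have main : ∀ d t, t + d = T →
      (V t).PosSemidef ∧ (V t - X t).PosSemidef ∧ (Y t - V t).PosSemidef := by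
    intro d
    induction d with
    | zero =>
      intro t ht
      simp only [Nat.add_zero] at ht
      subst ht
      rw [hVT, hXT, hYT, sub_self]
      exact ⟨hC t le_rfl, Matrix.PosSemidef.zero, Matrix.PosSemidef.zero⟩
    | succ d ih =>
      intro t ht
      have htT : t < T := by omega
      obtain ⟨hW, hVX, hYV⟩ := ih (t + 1) (by omega)
      have hWt : (V (t + 1))ᵀ = V (t + 1) := transpose_eq_self_of_psd hW.isHermitian
      have hS : (R t + (B t)ᵀ * V (t + 1) * B t).PosDef :=
        (hR t htT).add_posSemidef (psdConj hW (B t))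
      have hSinv : ((R t + (B t)ᵀ * V (t + 1) * B t)⁻¹).PosDef := hS.inv
      have hJT : ((R t + (B t)ᵀ * V (t + 1) * B t)⁻¹)ᵀ
          = (R t + (B t)ᵀ * V (t + 1) * B t)⁻¹ :=
        transpose_eq_self_of_psd hSinv.isHermitian
      have hJRJ : (R t + (B t)ᵀ * V (t + 1) * B t)⁻¹ * (R t + (B t)ᵀ * V (t + 1) * B t)
          * (R t + (B t)ᵀ * V (t + 1) * B t)⁻¹ = (R t + (B t)ᵀ * V (t + 1) * B t)⁻¹ := by
        rw [Matrix.nonsing_inv_mul _ hS.det_pos.ne'.isUnit, Matrix.one_mul]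
      have eV : V t = C t + (F t + B t * K t)ᵀ * V (t + 1) * (F t + B t * K t)
          + (K t)ᵀ * R t * K t := by
        rw [hV t htT, hK t htT]
        exact completion_of_squares (C t) (F t) (V (t + 1)) (B t) (R t) _ hWt hJT hJRJ
      have hVt : (V t).PosSemidef := by
        rw [eV]
        exact ((hC t htT.le).add (psdConj hW _)).add (psdConj (hR t htT).posSemidef _)
      have eVX : V t - X t
          = (F t + B t * K t)ᵀ * (V (t + 1) - X (t + 1)) * (F t + B t * K t)
            + (K t)ᵀ * R t * K t := by
        rw [eV, hX t htT, Matrix.mul_sub, Matrix.sub_mul]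
        abel
      have hVXt : (V t - X t).PosSemidef := by
        rw [eVX]
        exact (psdConj hVX _).add (psdConj (hR t htT).posSemidef _)
      have eYV : Y t - V t = (F t)ᵀ * (Y (t + 1) - V (t + 1)) * F t
          + ((B t)ᵀ * V (t + 1) * F t)ᵀ * (R t + (B t)ᵀ * V (t + 1) * B t)⁻¹
            * ((B t)ᵀ * V (t + 1) * F t) := by
        rw [hY t htT, hV t htT]
        simp only [transpose_mul, transpose_transpose, hWt, Matrix.mul_sub, Matrix.sub_mul,
          Matrix.mul_assoc]
        abel
      have hYVt : (Y t - V t).PosSemidef := by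
        rw [eYV]
        exact (psdConj hYV _).add (psdConj hSinv.posSemidef _)
      exact ⟨hVt, hVXt, hYVt⟩
  obtain ⟨hV0, hVX0, hYV0⟩ := main T 0 (by omega)
  refine ⟨hVX0, hYV0, fun hX0 => ?_⟩
  have eX : X 0 + (V 0 - X 0) = V 0 := by abel
  have eY : V 0 + (Y 0 - V 0) = Y 0 := by abel
  have hVpd : (V 0).PosDef := by
    have := hX0.add_posSemidef hVX0
    rwa [eX] at this
  have h1 : (X 0).det ≤ (V 0).det := by
    have := det_le_det_add hX0 hVX0
    rwa [eX] at this
  have h2 : (V 0).det ≤ (Y 0).det := by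
    have := det_le_det_add hVpd hYV0
    rwa [eY] at this
  exact ⟨Real.log_le_log hX0.det_pos h1, Real.log_le_log hVpd.det_pos h2⟩
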